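/- For every integer k ≥ 0, the function x ↦ a^F_k(x) from ℚ to ℚ is a polynomial function: there exists a (unique) polynomial P_k ∈ ℚ[x] with P_k(x) = a^F_k(x) for all x ∈ ℚ, and P_k has degree exactly k with leading coefficient 2^k/k!. -/

import Mathlib

def ffall (x : ℚ) (n : ℕ) : ℚ := ∏ i ∈ Finset.range n, (x - (i : ℚ))

def gchoose (x : ℚ) (n : ℤ) : ℚ :=
  if 0 ≤ n then ffall x n.toNat / ((n.toNat).factorial : ℚ) else 0

open Polynomial in
noncomputable def ffP (a : ℚ) (n : ℕ) : Polynomial ℚ :=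
  ∏ i ∈ Finset.range n, (X + C (a - i))

open Polynomial in
lemma ffP_eval (a x : ℚ) (n : ℕ) : (ffP a n).eval x = ffall (x + a) n := by
  simp only [ffP, ffall, eval_prod, eval_add, eval_X, eval_C]
  exact Finset.prod_congr rfl fun i _ => by ring

lemma ffP_monic (a : ℚ) (n : ℕ) : (ffP a n).Monic :=
  Polynomial.monic_prod_of_monic _ _ fun i _ => Polynomial.monic_X_add_C _

lemma ffP_natDegree (a : ℚ) (n : ℕ) : (ffP a n).natDegree = n := by
  rw [ffP, Polynomial.natDegree_prod_of_monic _ _ fun i _ => Polynomial.monic_X_add_C _]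
  simp only [Polynomial.natDegree_X_add_C, Finset.sum_const, smul_eq_mul, mul_one,
    Finset.card_range]

open Polynomial in
noncomputable def gcP (a : ℚ) (n : ℤ) : Polynomial ℚ :=
  if 0 ≤ n then C (((n.toNat).factorial : ℚ)⁻¹) * ffP a n.toNat else 0

lemma gcP_eval (a x : ℚ) (n : ℤ) : (gcP a n).eval x = gchoose (x + a) n := by
  unfold gcP gchoose
  split
  · simp [ffP_eval, div_eq_mul_inv, mul_comm]
  · simp

lemma gcP_natDegree_le (a : ℚ) (n : ℕ) : (gcP a (n : ℤ)).natDegree ≤ n := by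
  simp only [gcP, if_pos (Int.ofNat_nonneg n), Int.toNat_natCast]
  exact (Polynomial.natDegree_mul_le).trans (by simp [ffP_natDegree])

lemma gcP_coeff (a : ℚ) (n : ℕ) : (gcP a (n : ℤ)).coeff n = ((n.factorial : ℚ))⁻¹ := by
  simp only [gcP, if_pos (Int.ofNat_nonneg n), Int.toNat_natCast, Polynomial.coeff_C_mul]
  have h : (ffP a n).coeff n = 1 := by
    have := (ffP_monic a n).leadingCoeff
    rwa [Polynomial.leadingCoeff, ffP_natDegree] at this
  rw [h, mul_one]

def aF (k : ℕ) (x : ℚ) : ℚ :=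
  (∑ p ∈ Finset.range (k + 1), (-1 : ℚ) ^ p * gchoose (x - 1 - p) p *
    ∑ r ∈ Finset.range (k - p + 1),
      3 ^ r * gchoose (x - 1 - 2 * p) r * gchoose ((p : ℚ) + 1) ((k : ℤ) - p - r))
  + ∑ p ∈ Finset.Icc 1 k, (-1 : ℚ) ^ p * gchoose (x - 1 - p) ((p : ℤ) - 1) *
    ∑ r ∈ Finset.range (k - p + 1),
      3 ^ r * gchoose (x - 2 * p) r * gchoose ((p : ℚ) - 1) ((k : ℤ) - p - r)

open Polynomial in
noncomputable def PaF (k : ℕ) : Polynomial ℚ :=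
  (∑ p ∈ Finset.range (k + 1), C ((-1 : ℚ) ^ p) * gcP (-1 - p) p *
    ∑ r ∈ Finset.range (k - p + 1),
      C ((3:ℚ) ^ r) * gcP (-1 - 2 * p) r * C (gchoose ((p : ℚ) + 1) ((k : ℤ) - p - r)))
  + ∑ p ∈ Finset.Icc 1 k, C ((-1 : ℚ) ^ p) * gcP (-1 - p) ((p : ℤ) - 1) *
    ∑ r ∈ Finset.range (k - p + 1),
      C ((3:ℚ) ^ r) * gcP (-(2 * p)) r * C (gchoose ((p : ℚ) - 1) ((k : ℤ) - p - r))

lemma PaF_eval (k : ℕ) (x : ℚ) : (PaF k).eval x = aF k x := by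
  unfold PaF aF
  simp only [Polynomial.eval_add, Polynomial.eval_finset_sum, Polynomial.eval_mul,
    Polynomial.eval_C, gcP_eval]
  congr 1
  · refine Finset.sum_congr rfl fun p _ => ?_
    rw [show x + (-1 - (p:ℚ)) = x - 1 - p from by ring]
    congr 1
    refine Finset.sum_congr rfl fun r _ => ?_
    rw [show x + (-1 - 2 * (p:ℚ)) = x - 1 - 2 * p from by ring]
  · refine Finset.sum_congr rfl fun p _ => ?_
    rw [show x + (-1 - (p:ℚ)) = x - 1 - p from by ring]
    congr 1
    refine Finset.sum_congr rfl fun r _ => ?_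
    rw [show x + (-(2 * (p:ℚ))) = x - 2 * p from by ring]

open Polynomial Finset

lemma gcP_sub_one (a : ℚ) (p : ℕ) (hp : 1 ≤ p) :
    gcP a ((p : ℤ) - 1) = gcP a ((p - 1 : ℕ) : ℤ) := by
  congr 1; omega

lemma inner_deg_le (m : ℕ) (b : ℚ) (d : ℕ → ℚ) :
    (∑ r ∈ Finset.range (m + 1), C ((3:ℚ) ^ r) * gcP b r * C (d r)).natDegree ≤ m := by
  refine Polynomial.natDegree_sum_le_of_forall_le _ _ fun r hr => ?_
  have hr' : r ≤ m := by simpa [Nat.lt_succ_iff] using hr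
  refine (Polynomial.natDegree_mul_le).trans ?_
  have h1 : (C ((3:ℚ) ^ r) * gcP b r).natDegree ≤ r :=
    (Polynomial.natDegree_mul_le).trans (by simpa using gcP_natDegree_le b r)
  simpa using h1.trans hr'

lemma inner_coeff (m : ℕ) (b : ℚ) (d : ℕ → ℚ) :
    (∑ r ∈ Finset.range (m + 1), C ((3:ℚ) ^ r) * gcP b r * C (d r)).coeff m
      = 3 ^ m * ((m.factorial : ℚ))⁻¹ * d m := by
  rw [Polynomial.finset_sum_coeff]
  rw [Finset.sum_eq_single_of_mem m (Finset.self_mem_range_succ m)]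
  · rw [Polynomial.coeff_mul_C, Polynomial.coeff_C_mul, gcP_coeff]
  · intro r hr hne
    have hr' : r < m := by
      have : r ≤ m := by simpa [Nat.lt_succ_iff] using hr
      omega
    apply Polynomial.coeff_eq_zero_of_natDegree_lt
    have h1 : (C ((3:ℚ) ^ r) * gcP b r * C (d r)).natDegree ≤ r :=
      (Polynomial.natDegree_mul_le).trans (by
        have : (C ((3:ℚ) ^ r) * gcP b r).natDegree ≤ r :=
          (Polynomial.natDegree_mul_le).trans (by simpa using gcP_natDegree_le b r)
        simpa using this)
    omega

lemma key_sum (k : ℕ) :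
    ∑ p ∈ Finset.range (k + 1),
      (-1:ℚ) ^ p * ((p.factorial : ℚ)⁻¹ * (3 ^ (k - p) * (((k - p).factorial : ℚ))⁻¹))
      = 2 ^ k / (k.factorial : ℚ) := by
  have hk : (k.factorial : ℚ) ≠ 0 := by positivity
  rw [eq_div_iff hk, Finset.sum_mul]
  rw [show (2:ℚ) = -1 + 3 by norm_num, add_pow]
  refine Finset.sum_congr rfl fun p hp => ?_
  have hp' : p ≤ k := by simpa [Nat.lt_succ_iff] using hp
  have hc : ((k.choose p : ℚ)) * (p.factorial : ℚ) * ((k - p).factorial : ℚ)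
      = (k.factorial : ℚ) := by
    exact_mod_cast congrArg (Nat.cast : ℕ → ℚ)
      (Nat.choose_mul_factorial_mul_factorial hp')
  have hpf : (p.factorial : ℚ) ≠ 0 := by positivity
  have hkpf : ((k - p).factorial : ℚ) ≠ 0 := by positivity
  field_simp
  linear_combination (-1:ℚ) * hc

lemma gchoose_zero (x : ℚ) : gchoose x 0 = 1 := by
  simp [gchoose, ffall]

lemma PaF_natDegree_le (k : ℕ) : (PaF k).natDegree ≤ k := by
  unfold PaF
  refine (Polynomial.natDegree_add_le _ _).trans (max_le ?_ ?_)
  · refine Polynomial.natDegree_sum_le_of_forall_le _ _ fun p hp => ?_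
    have hp' : p ≤ k := Finset.mem_range_succ_iff.mp hp
    refine Polynomial.natDegree_mul_le.trans ?_
    have h1 : (C ((-1:ℚ) ^ p) * gcP (-1 - p) p).natDegree ≤ p :=
      Polynomial.natDegree_mul_le.trans (by simpa using gcP_natDegree_le (-1 - p) p)
    have h2 := inner_deg_le (k - p) (-1 - 2 * p)
      (fun r => gchoose ((p : ℚ) + 1) ((k : ℤ) - p - r))
    calc _ ≤ p + (k - p) := add_le_add h1 h2
    _ = k := by omega
  · refine Polynomial.natDegree_sum_le_of_forall_le _ _ fun p hp => ?_
    obtain ⟨hp1, hp2⟩ := Finset.mem_Icc.mp hp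
    refine Polynomial.natDegree_mul_le.trans ?_
    have h1 : (C ((-1:ℚ) ^ p) * gcP (-1 - p) ((p : ℤ) - 1)).natDegree ≤ p - 1 := by
      rw [gcP_sub_one _ _ hp1]
      exact Polynomial.natDegree_mul_le.trans
        (by simpa using gcP_natDegree_le (-1 - p) (p - 1))
    have h2 := inner_deg_le (k - p) (-(2 * p))
      (fun r => gchoose ((p : ℚ) - 1) ((k : ℤ) - p - r))
    calc _ ≤ (p - 1) + (k - p) := add_le_add h1 h2
    _ ≤ k := by omega

lemma PaF_coeff_k (k : ℕ) : (PaF k).coeff k = 2 ^ k / (k.factorial : ℚ) := by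
  unfold PaF
  rw [Polynomial.coeff_add, Polynomial.finset_sum_coeff, Polynomial.finset_sum_coeff]
  have h2 : ∑ p ∈ Finset.Icc 1 k,
      (C ((-1 : ℚ) ^ p) * gcP (-1 - p) ((p : ℤ) - 1) *
        ∑ r ∈ Finset.range (k - p + 1),
          C ((3:ℚ) ^ r) * gcP (-(2 * p)) r *
            C (gchoose ((p : ℚ) - 1) ((k : ℤ) - p - r))).coeff k = 0 := by
    refine Finset.sum_eq_zero fun p hp => ?_
    obtain ⟨hp1, hp2⟩ := Finset.mem_Icc.mp hp
    apply Polynomial.coeff_eq_zero_of_natDegree_lt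
    have h1 : (C ((-1:ℚ) ^ p) * gcP (-1 - p) ((p : ℤ) - 1)).natDegree ≤ p - 1 := by
      rw [gcP_sub_one _ _ hp1]
      exact Polynomial.natDegree_mul_le.trans
        (by simpa using gcP_natDegree_le (-1 - p) (p - 1))
    have h2 := inner_deg_le (k - p) (-(2 * p))
      (fun r => gchoose ((p : ℚ) - 1) ((k : ℤ) - p - r))
    have := Polynomial.natDegree_mul_le.trans (add_le_add h1 h2)
    omega
  rw [h2, add_zero]
  rw [← key_sum k]
  refine Finset.sum_congr rfl fun p hp => ?_
  have hp' : p ≤ k := Finset.mem_range_succ_iff.mp hp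
  rw [mul_assoc, Polynomial.coeff_C_mul]
  have hmul := Polynomial.coeff_mul_add_eq_of_natDegree_le (f := gcP (-1 - (p:ℚ)) p)
    (gcP_natDegree_le (-1 - p) p)
    (inner_deg_le (k - p) (-1 - 2 * p) (fun r => gchoose ((p : ℚ) + 1) ((k : ℤ) - p - r)))
  rw [show p + (k - p) = k from by omega] at hmul
  rw [hmul, gcP_coeff, inner_coeff]
  have hd : gchoose ((p : ℚ) + 1) ((k : ℤ) - p - (k - p : ℕ)) = 1 := by
    rw [show (k : ℤ) - p - (k - p : ℕ) = 0 from by omega, gchoose_zero]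
  rw [hd]
  ring

theorem aF_polynomial (k : ℕ) :
    ∃ P : Polynomial ℚ,
      (∀ x : ℚ, P.eval x = aF k x) ∧
      (∀ Q : Polynomial ℚ, (∀ x : ℚ, Q.eval x = aF k x) → Q = P) ∧
      P.natDegree = k ∧
      P.leadingCoeff = 2 ^ k / (k.factorial : ℚ) := by
  refine ⟨PaF k, PaF_eval k, ?_, ?_, ?_⟩
  · intro Q hQ
    exact Polynomial.funext fun x => by rw [hQ, PaF_eval]
  · have hco : (PaF k).coeff k ≠ 0 := by
      rw [PaF_coeff_k]
      positivity
    exact le_antisymm (PaF_natDegree_le k) (Polynomial.le_natDegree_of_ne_zero hco)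
  · have hdeg : (PaF k).natDegree = k := by
      have hco : (PaF k).coeff k ≠ 0 := by
        rw [PaF_coeff_k]; positivity
      exact le_antisymm (PaF_natDegree_le k) (Polynomial.le_natDegree_of_ne_zero hco)
    rw [Polynomial.leadingCoeff, hdeg, PaF_coeff_k]
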